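/- For every pair of disjoint subsets J, K ⊆ I one has σ_{J,K} ⊆ σ_J := σ_{J, I−J}; moreover for any two distinct subsets J, J′ ⊆ I, the cone σ_J is not contained in σ_{J′}. In particular the maximal cones of the collection Σ = {σ_{J,K} : J, K ⊆ I, J ∩ K = ∅} under inclusion are precisely the cones σ_J for J ⊆ I. -/
import Mathlib


open Matrix

/-- The `j`-th simple coroot `α^∨_j := Σ_i C_{ij} e_i`, i.e. the `j`-th column of `C`. -/
def acoroot {n : ℕ} (C : Matrix (Fin n) (Fin n) ℝ) (j : Fin n) : Fin n → ℝ :=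
  fun i => C i j

/-- The cone `σ_{J,K}` of nonnegative linear combinations of the `-α^∨_j` (`j ∈ J`)
and the standard basis vectors `e_k` (`k ∈ K`). -/
def sigmaCone {n : ℕ} (C : Matrix (Fin n) (Fin n) ℝ) (J K : Finset (Fin n)) :
    Set (Fin n → ℝ) :=
  {v | ∃ x y : Fin n → ℝ, (∀ j ∈ J, 0 ≤ x j) ∧ (∀ k ∈ K, 0 ≤ y k) ∧
    v = (∑ j ∈ J, x j • (-acoroot C j)) + ∑ k ∈ K, y k • (Pi.single k 1 : Fin n → ℝ)}

lemma sigma_eval_sum {n : ℕ} (C : Matrix (Fin n) (Fin n) ℝ) (J K : Finset (Fin n))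
    (x y : Fin n → ℝ) (i : Fin n) :
    ((∑ j ∈ J, x j • (-acoroot C j)) + ∑ k ∈ K, y k • (Pi.single k 1 : Fin n → ℝ)) i
    = (∑ j ∈ J, x j * (-C i j)) + (if i ∈ K then y i else 0) := by
  simp [Finset.sum_apply, acoroot, Pi.single_apply, mul_ite, Finset.sum_ite_eq]

lemma sigma_mono_right {n : ℕ} (C : Matrix (Fin n) (Fin n) ℝ) (J K K' : Finset (Fin n))
    (h : K ⊆ K') : sigmaCone C J K ⊆ sigmaCone C J K' := by
  rintro v ⟨x, y, hx, hy, rfl⟩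
  refine ⟨x, fun k => if k ∈ K then y k else 0, hx, fun k _ => ?_, ?_⟩
  · dsimp only
    split
    · exact hy _ ‹_›
    · exact le_rfl
  · congr 1
    have h2 : ∑ k ∈ K, (if k ∈ K then y k else 0) • (Pi.single k 1 : Fin n → ℝ)
        = ∑ k ∈ K', (if k ∈ K then y k else 0) • (Pi.single k 1 : Fin n → ℝ) :=
      Finset.sum_subset h (by intro k _ hk; simp [hk])
    rw [← h2]
    exact Finset.sum_congr rfl fun k hk => by simp [hk]

lemma sigma_single_mem {n : ℕ} (C : Matrix (Fin n) (Fin n) ℝ) (J K : Finset (Fin n))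
    (k : Fin n) (hk : k ∈ K) : (Pi.single k 1 : Fin n → ℝ) ∈ sigmaCone C J K := by
  refine ⟨0, fun k' => if k' = k then 1 else 0, by simp, ?_, ?_⟩
  · intro k' _; dsimp only; split <;> norm_num
  · simp only [Pi.zero_apply, zero_smul, Finset.sum_const_zero, zero_add, ite_smul, one_smul,
      zero_smul]
    rw [Finset.sum_ite_eq' K k (fun k' => (Pi.single k' 1 : Fin n → ℝ))]
    simp [hk]

lemma sigma_nacoroot_mem {n : ℕ} (C : Matrix (Fin n) (Fin n) ℝ) (J K : Finset (Fin n))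
    (j : Fin n) (hj : j ∈ J) : (-acoroot C j) ∈ sigmaCone C J K := by
  refine ⟨fun j' => if j' = j then 1 else 0, 0, ?_, by simp, ?_⟩
  · intro j' _; dsimp only; split <;> norm_num
  · simp only [Pi.zero_apply, zero_smul, Finset.sum_const_zero, add_zero, ite_smul, one_smul,
      zero_smul]
    rw [Finset.sum_ite_eq' J j (fun j' => -acoroot C j')]
    simp [hj]

lemma sigma_nacoroot_notmem {n : ℕ} (C : Matrix (Fin n) (Fin n) ℝ)
    (hdiag : ∀ i, C i i = 2) (hoff : ∀ i j, i ≠ j → C i j ≤ 0)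
    (J : Finset (Fin n)) (j : Fin n) (hj : j ∉ J) :
    (-acoroot C j) ∉ sigmaCone C J Jᶜ := by
  rintro ⟨x, y, hx, hy, heq⟩
  have h := congrFun heq j
  rw [sigma_eval_sum] at h
  simp only [Pi.neg_apply, acoroot, hdiag] at h
  have h1 : (0:ℝ) ≤ ∑ i ∈ J, x i * -C j i :=
    Finset.sum_nonneg fun i hi => mul_nonneg (hx i hi)
      (neg_nonneg.2 (hoff j i (fun e => hj (e ▸ hi))))
  have h2 : (0:ℝ) ≤ if j ∈ Jᶜ then y j else 0 := by
    split
    · exact hy j ‹_›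
    · exact le_rfl
  linarith

lemma sigma_single_notmem {n : ℕ} (C : Matrix (Fin n) (Fin n) ℝ)
    (hdiag : ∀ i, C i i = 2) (hoff : ∀ i j, i ≠ j → C i j ≤ 0)
    (hprin : ∀ S : Finset (Fin n), S.Nonempty →
      IsUnit (C.submatrix (fun a : S => (a : Fin n)) (fun a : S => (a : Fin n))) ∧
      ∀ i j : S,
        0 ≤ (C.submatrix (fun a : S => (a : Fin n)) (fun a : S => (a : Fin n)))⁻¹ i j)
    (J : Finset (Fin n)) (k : Fin n) (hk : k ∈ J) :
    (Pi.single k 1 : Fin n → ℝ) ∉ sigmaCone C J Jᶜ := by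
  rintro ⟨x, y, hx, hy, heq⟩
  set M := C.submatrix (fun a : J => (a : Fin n)) (fun a : J => (a : Fin n)) with hM
  obtain ⟨hu, hpos⟩ := hprin J ⟨k, hk⟩
  have hdet : IsUnit M.det := (Matrix.isUnit_iff_isUnit_det M).1 hu
  have hNM : M⁻¹ * M = 1 := Matrix.nonsing_inv_mul M hdet
  set N := M⁻¹ with hN
  set kk : J := ⟨k, hk⟩ with hkk
  have hsum : ∑ j : J, N kk j * M j kk = 1 := by
    have : (N * M) kk kk = (1 : Matrix J J ℝ) kk kk := by rw [hNM]
    simpa [Matrix.mul_apply, Matrix.one_apply] using this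
  have hrest : ∑ j ∈ Finset.univ.erase kk, N kk j * M j kk ≤ 0 :=
    Finset.sum_nonpos fun j hj => mul_nonpos_of_nonneg_of_nonpos (hpos kk j)
      (hoff _ _ fun e => (Finset.mem_erase.1 hj).1 (Subtype.ext e))
  have hMkk : M kk kk = 2 := hdiag k
  have hNpos : 0 < N kk kk := by
    have h2 : N kk kk * M kk kk + ∑ j ∈ Finset.univ.erase kk, N kk j * M j kk = 1 := by
      rw [← hsum]
      exact Finset.add_sum_erase Finset.univ (fun j : { x // x ∈ J } => N kk j * M j kk)
        (Finset.mem_univ kk)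
    rw [hMkk] at h2
    linarith
  have heqn : ∀ i : J, (if (i : Fin n) = k then (1:ℝ) else 0) = ∑ j ∈ J, x j * -C i j := by
    intro i
    have h := congrFun heq (i : Fin n)
    rw [sigma_eval_sum, Pi.single_apply, if_neg (by simp [i.2] : ¬ (i:Fin n) ∈ Jᶜ),
      add_zero] at h
    exact h
  have hkey : N kk kk = - x k := by
    calc N kk kk = ∑ i : J, N kk i * (if (i : Fin n) = k then (1:ℝ) else 0) := by
          rw [Finset.sum_congr rfl (fun i _ => show N kk i * _ =
              if i = kk then N kk kk else 0 by
            by_cases h : i = kk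
            · subst h; simp [hkk]
            · rw [if_neg (fun e : (i:Fin n) = k => h (Subtype.ext e)), mul_zero,
                if_neg h])]
          simp
      _ = ∑ i : J, N kk i * ∑ j : J, x j * -C i j := by
          refine Finset.sum_congr rfl fun i _ => ?_
          rw [Finset.sum_coe_sort J (fun j => x j * -C (i : Fin n) j), ← heqn i]
      _ = ∑ j : J, ∑ i : J, N kk i * (x j * -C i j) := by
          simp_rw [Finset.mul_sum]
          exact Finset.sum_comm
      _ = ∑ j : J, (- x j) * ∑ i : J, N kk i * M i j := by
          refine Finset.sum_congr rfl fun j _ => ?_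
          rw [Finset.mul_sum]
          refine Finset.sum_congr rfl fun i _ => ?_
          show N kk i * (x j * -C i j) = -x j * (N kk i * C i j)
          ring
      _ = - x k := by
          have : ∀ j : J, ∑ i : J, N kk i * M i j = (N * M) kk j := fun j =>
            (Matrix.mul_apply).symm
          simp_rw [this, hNM, Matrix.one_apply]
          simp [hkk, Finset.sum_ite_eq]
  have := hx k hk
  linarith

theorem stmt_5
    (n : ℕ) (hn : 1 ≤ n) (C : Matrix (Fin n) (Fin n) ℝ)
    (hdiag : ∀ i, C i i = 2)
    (hoff : ∀ i j, i ≠ j → C i j ≤ 0)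
    (hprin : ∀ S : Finset (Fin n), S.Nonempty →
      IsUnit (C.submatrix (fun a : S => (a : Fin n)) (fun a : S => (a : Fin n))) ∧
      ∀ i j : S,
        0 ≤ (C.submatrix (fun a : S => (a : Fin n)) (fun a : S => (a : Fin n)))⁻¹ i j) :
    (∀ J K : Finset (Fin n), Disjoint J K → sigmaCone C J K ⊆ sigmaCone C J Jᶜ) ∧
    (∀ J J' : Finset (Fin n), J ≠ J' → ¬ sigmaCone C J Jᶜ ⊆ sigmaCone C J' J'ᶜ) ∧
    {s : Set (Fin n → ℝ) |
        (∃ J K : Finset (Fin n), Disjoint J K ∧ s = sigmaCone C J K) ∧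
        ∀ t : Set (Fin n → ℝ),
          (∃ J K : Finset (Fin n), Disjoint J K ∧ t = sigmaCone C J K) → s ⊆ t → s = t}
      = {s : Set (Fin n → ℝ) | ∃ J : Finset (Fin n), s = sigmaCone C J Jᶜ} := by

  have part1 : ∀ J K : Finset (Fin n), Disjoint J K → sigmaCone C J K ⊆ sigmaCone C J Jᶜ := by
    intro J K hd
    exact sigma_mono_right C J K Jᶜ
      (fun k hkK => Finset.mem_compl.2 fun hkJ => Finset.disjoint_left.1 hd hkJ hkK)
  have part2 : ∀ J J' : Finset (Fin n), J ≠ J' →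
      ¬ sigmaCone C J Jᶜ ⊆ sigmaCone C J' J'ᶜ := by
    intro J J' hne hsub
    by_cases hss : J' ⊆ J
    · have hns : ¬ J ⊆ J' := fun h => hne (Finset.Subset.antisymm h hss)
      obtain ⟨j, hjJ, hjJ'⟩ := Finset.not_subset.1 hns
      exact sigma_nacoroot_notmem C hdiag hoff J' j hjJ'
        (hsub (sigma_nacoroot_mem C J Jᶜ j hjJ))
    · obtain ⟨k, hkJ', hkJ⟩ := Finset.not_subset.1 hss
      exact sigma_single_notmem C hdiag hoff hprin J' k hkJ'
        (hsub (sigma_single_mem C J Jᶜ k (Finset.mem_compl.2 hkJ)))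
  refine ⟨part1, part2, ?_⟩
  ext s
  simp only [Set.mem_setOf_eq]
  constructor
  · rintro ⟨⟨J, K, hdisj, rfl⟩, hmax⟩
    exact ⟨J, hmax _ ⟨J, Jᶜ, disjoint_compl_right, rfl⟩ (part1 J K hdisj)⟩
  · rintro ⟨J, rfl⟩
    refine ⟨⟨J, Jᶜ, disjoint_compl_right, rfl⟩, ?_⟩
    rintro t ⟨J', K', hdisj', rfl⟩ hsub
    by_cases hJJ : J = J'
    · subst hJJ
      exact Set.Subset.antisymm hsub (part1 J K' hdisj')
    · exact absurd (hsub.trans (part1 J' K' hdisj')) (part2 J J' hJJ)
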